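/- Let n ≥ 2 and let V_n(M) = M[x]/M[x](x^n) be the right V_n(R) = R[x]/(x^n)-module of truncated polynomial classes, with σ extended to σ̄ on V_n(R) by acting coefficientwise. If V_n(M) is σ̄-semicommutative as a right V_n(R)-module, then M is σ-semicommutative as a right R-module. -/

import Mathlib

open MulOpposite Finset

/-- If the truncated polynomial module `Vₙ(M) = M[x]/M[x](xⁿ)` (whose elements are tuples
`(m₀,…,m_{n-1})` with convolution scalar action truncated at degree `n-1`) is
`σ̄`-semicommutative as a right `Vₙ(R) = R[x]/(xⁿ)`-module, then `M` is `σ`-semicommutative. -/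
theorem sigma_semicomm_of_Vn {R M : Type*} [Ring R] [AddCommGroup M] [Module Rᵐᵒᵖ M]
    (σ : R →+* R) (n : ℕ) (hn : 2 ≤ n)
    (hVn : ∀ (U : ℕ → M) (A : ℕ → R),
        (∀ k < n, ∑ ij ∈ antidiagonal k, op (A ij.2) • U ij.1 = 0) →
        ∀ (B : ℕ → R), ∀ k < n,
          ∑ ij ∈ antidiagonal k,
            op (σ (A ij.2)) • (∑ pq ∈ antidiagonal ij.1, op (B pq.2) • U pq.1) = 0) :
    ∀ (m : M) (a : R), op a • m = 0 → ∀ r : R, op (σ a) • (op r • m) = 0 := by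
  intro m a ha r
  have h := hVn (fun k => if k = 0 then m else 0) (fun k => if k = 0 then a else 0)
    (by
      intro k hk
      rcases Nat.eq_zero_or_pos k with rfl | hk0
      · simpa using ha
      · apply Finset.sum_eq_zero
        intro ij hij
        rw [Finset.HasAntidiagonal.mem_antidiagonal] at hij
        by_cases h1 : ij.1 = 0
        · have : ij.2 ≠ 0 := by omega
          simp [h1, this]
        · simp [h1])
    (fun k => if k = 0 then r else 0) 0 (by omega)
  simpa using h
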